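/- arXiv:1007.3949 — 2 statements merged into one kernel-verified Lean document; each statement's English description precedes it below -/
import Mathlib

section
/- For all m×n complex matrices A and B and every k with 1 ≤ k ≤ min(m,n), the Ky Fan k-norm satisfies the triangle inequality: ‖A + B‖_{F_k} ≤ ‖A‖_{F_k} + ‖B‖_{F_k}. -/
open Matrix BigOperators

noncomputable def singularValues {α β : Type*} [Fintype α] [Fintype β] [DecidableEq α]
    (A : Matrix α β ℂ) : α → ℝ :=
  fun i => Real.sqrt ((Matrix.isHermitian_mul_conjTranspose_self A).eigenvalues i)

/-- The Ky Fan `k`-norm: the sum of the `k` largest singular values, expressed as the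
largest sum of singular values over index sets of size `k`. -/
noncomputable def kyFan {α β : Type*} [Fintype α] [Fintype β] [DecidableEq α]
    (k : ℕ) (A : Matrix α β ℂ) : ℝ :=
  sSup ((fun s : Finset α => ∑ i ∈ s, singularValues A i) '' {s | s.card = k})

section basic
variable {m n : ℕ}

lemma sv_nonneg (A : Matrix (Fin m) (Fin n) ℂ) (i : Fin m) : 0 ≤ singularValues A i :=
  Real.sqrt_nonneg _

lemma sv_sq (A : Matrix (Fin m) (Fin n) ℂ) (i : Fin m) :
    singularValues A i ^ 2 = (Matrix.isHermitian_mul_conjTranspose_self A).eigenvalues i :=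
  Real.sq_sqrt (Matrix.eigenvalues_self_mul_conjTranspose_nonneg A i)

lemma le_kyFan (A : Matrix (Fin m) (Fin n) ℂ) (t : Finset (Fin m)) :
    (∑ i ∈ t, singularValues A i) ≤ kyFan t.card A := by
  apply le_csSup
  · exact (Set.toFinite _).image _ |>.bddAbove
  · exact ⟨t, rfl, rfl⟩

lemma kyFan_nonneg (A : Matrix (Fin m) (Fin n) ℂ) {k : ℕ} (hk : k ≤ m) : 0 ≤ kyFan k A := by
  obtain ⟨t, -, ht⟩ := Finset.exists_subset_card_eq (s := (Finset.univ : Finset (Fin m))) (n := k) (by simpa)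
  calc (0:ℝ) ≤ ∑ i ∈ t, singularValues A i := Finset.sum_nonneg fun i _ => sv_nonneg A i
    _ ≤ kyFan t.card A := le_kyFan A t
    _ = kyFan k A := by rw [ht]

lemma kyFan_mono (A : Matrix (Fin m) (Fin n) ℂ) {k l : ℕ} (hkl : k ≤ l) (hl : l ≤ m) :
    kyFan k A ≤ kyFan l A := by
  apply Real.sSup_le _ (kyFan_nonneg A hl)
  rintro x ⟨s, hs, rfl⟩
  obtain ⟨t, hst, ht⟩ := Finset.exists_superset_card_eq (le_trans (le_of_eq hs) hkl)
    (by simpa using hl)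
  calc ∑ i ∈ s, singularValues A i ≤ ∑ i ∈ t, singularValues A i :=
        Finset.sum_le_sum_of_subset_of_nonneg hst fun i _ _ => sv_nonneg A i
    _ ≤ kyFan t.card A := le_kyFan A t
    _ = kyFan l A := by rw [ht]

lemma exists_top_finset (a : Fin m → ℝ) (k : ℕ) (hk : k ≤ m) :
    ∃ t : Finset (Fin m), t.card = k ∧ ∀ j ∉ t, ∀ i ∈ t, a j ≤ a i := by
  induction k with
  | zero => exact ⟨∅, rfl, by simp⟩
  | succ k ih =>
    obtain ⟨t, htc, ht⟩ := ih (Nat.le_of_succ_le hk)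
    have hne : (tᶜ : Finset (Fin m)).Nonempty := by
      rw [← Finset.card_pos, Finset.card_compl, htc]
      simp only [Fintype.card_fin]
      omega
    obtain ⟨j0, hj0, hj0max⟩ := Finset.exists_max_image _ a hne
    have hj0t : j0 ∉ t := Finset.mem_compl.mp hj0
    refine ⟨insert j0 t, by rw [Finset.card_insert_of_notMem hj0t, htc], ?_⟩
    intro j hj i hi
    have hjt : j ∉ t := fun h => hj (Finset.mem_insert_of_mem h)
    rcases Finset.mem_insert.mp hi with rfl | hi
    · exact hj0max j (Finset.mem_compl.mpr hjt)
    · exact ht j hjt i hi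

lemma sum_mul_le_top_sum (a c : Fin m → ℝ) (k : ℕ) (hk : k ≤ m)
    (ha : ∀ j, 0 ≤ a j) (hc0 : ∀ j, 0 ≤ c j) (hc1 : ∀ j, c j ≤ 1)
    (hcs : ∑ j, c j ≤ (k : ℝ)) :
    ∃ t : Finset (Fin m), t.card = k ∧ ∑ j, a j * c j ≤ ∑ j ∈ t, a j := by
  obtain ⟨t, htc, ht⟩ := exists_top_finset a k hk
  refine ⟨t, htc, ?_⟩
  rcases Nat.eq_zero_or_pos k with rfl | hkpos
  · have hc : ∀ j ∈ (Finset.univ : Finset (Fin m)), c j = 0 := by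
      rw [← Finset.sum_eq_zero_iff_of_nonneg (fun j _ => hc0 j)]
      exact le_antisymm (by simpa using hcs) (Finset.sum_nonneg fun j _ => hc0 j)
    calc ∑ j, a j * c j = ∑ j : Fin m, 0 := Finset.sum_congr rfl fun j hj => by rw [hc j hj, mul_zero]
      _ = 0 := Finset.sum_const_zero
      _ ≤ ∑ j ∈ t, a j := Finset.sum_nonneg fun j _ => ha j
  · have htne : t.Nonempty := Finset.card_pos.mp (htc ▸ hkpos)
    obtain ⟨i0, hi0, hmin⟩ := Finset.exists_min_image t a htne
    have h1 : ∑ j ∈ tᶜ, a j * c j ≤ a i0 * ∑ j ∈ tᶜ, c j := by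
      rw [Finset.mul_sum]
      exact Finset.sum_le_sum fun j hj =>
        mul_le_mul_of_nonneg_right (ht j (Finset.mem_compl.mp hj) i0 hi0) (hc0 j)
    have hsplitc : ∑ j ∈ t, c j + ∑ j ∈ tᶜ, c j = ∑ j, c j := Finset.sum_add_sum_compl t c
    have h2 : ∑ j ∈ tᶜ, c j ≤ ∑ j ∈ t, (1 - c j) := by
      rw [Finset.sum_sub_distrib, Finset.sum_const, htc, nsmul_eq_mul, mul_one]
      linarith
    have h3 : a i0 * ∑ j ∈ t, (1 - c j) ≤ ∑ j ∈ t, a j * (1 - c j) := by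
      rw [Finset.mul_sum]
      exact Finset.sum_le_sum fun j hj =>
        mul_le_mul_of_nonneg_right (hmin j hj) (by linarith [hc1 j])
    have h4 : a i0 * ∑ j ∈ tᶜ, c j ≤ a i0 * ∑ j ∈ t, (1 - c j) :=
      mul_le_mul_of_nonneg_left h2 (ha i0)
    have hsplit : ∑ j ∈ t, a j * c j + ∑ j ∈ tᶜ, a j * c j = ∑ j, a j * c j :=
      Finset.sum_add_sum_compl t _
    have hfin : ∑ j ∈ t, a j * c j + ∑ j ∈ t, a j * (1 - c j) = ∑ j ∈ t, a j := by
      rw [← Finset.sum_add_distrib]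
      exact Finset.sum_congr rfl fun j _ => by ring
    linarith
end basic

section spec
variable {m n : ℕ}
local notation "⟪" x ", " y "⟫" => @inner ℂ _ _ x y

noncomputable def toE {n : ℕ} (v : Fin n → ℂ) : EuclideanSpace ℂ (Fin n) := (WithLp.equiv 2 _).symm v

lemma inner_toE_mulVec (M : Matrix (Fin m) (Fin n) ℂ) (w : EuclideanSpace ℂ (Fin m))
    (v : EuclideanSpace ℂ (Fin n)) :
    ⟪w, toE (M *ᵥ v)⟫ = ⟪toE (Mᴴ *ᵥ w), v⟫ := by
  show dotProduct (M *ᵥ v) (star (w : Fin m → ℂ))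
      = dotProduct v (star (Mᴴ *ᵥ (w : Fin m → ℂ)))
  rw [dotProduct_comm (M *ᵥ _), dotProduct_comm v, Matrix.star_mulVec, dotProduct_mulVec, Matrix.conjTranspose_conjTranspose]

noncomputable def wB (M : Matrix (Fin m) (Fin n) ℂ) (j : Fin m) : EuclideanSpace ℂ (Fin m) :=
  (Matrix.isHermitian_mul_conjTranspose_self M).eigenvectorBasis j

noncomputable def yv (M : Matrix (Fin m) (Fin n) ℂ) (j : Fin m) : EuclideanSpace ℂ (Fin n) :=
  toE (Mᴴ *ᵥ (wB M j))

lemma inner_wB_mulVec (M : Matrix (Fin m) (Fin n) ℂ) (j : Fin m) (v : EuclideanSpace ℂ (Fin n)) :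
    ⟪wB M j, toE (M *ᵥ v)⟫ = ⟪yv M j, v⟫ :=
  inner_toE_mulVec M (wB M j) v

lemma inner_yv (M : Matrix (Fin m) (Fin n) ℂ) (j l : Fin m) :
    ⟪yv M j, yv M l⟫ = if j = l
      then ((Matrix.isHermitian_mul_conjTranspose_self M).eigenvalues j : ℂ) else 0 := by
  have h1 : ⟪yv M j, yv M l⟫ = ⟪wB M j, toE (M *ᵥ (yv M l))⟫ :=
    (inner_toE_mulVec M (wB M j) (yv M l)).symm
  have h2 : M *ᵥ (yv M l : Fin n → ℂ) = (M * Mᴴ) *ᵥ (wB M l) := by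
    rw [← Matrix.mulVec_mulVec]; rfl
  have h3 : (M * Mᴴ) *ᵥ (wB M l : Fin m → ℂ)
      = (Matrix.isHermitian_mul_conjTranspose_self M).eigenvalues l • (wB M l : Fin m → ℂ) :=
    (Matrix.isHermitian_mul_conjTranspose_self M).mulVec_eigenvectorBasis l
  have h4 : toE ((Matrix.isHermitian_mul_conjTranspose_self M).eigenvalues l • (wB M l : Fin m → ℂ))
      = (Matrix.isHermitian_mul_conjTranspose_self M).eigenvalues l • wB M l := rfl
  rw [h1, h2, h3, h4, RCLike.real_smul_eq_coe_smul (K := ℂ), inner_smul_right]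
  have h5 : ⟪wB M j, wB M l⟫ = if j = l then 1 else 0 :=
    orthonormal_iff_ite.mp (Matrix.isHermitian_mul_conjTranspose_self M).eigenvectorBasis.orthonormal j l
  rw [h5]
  split
  · next h => subst h; simp
  · simp

lemma norm_yv (M : Matrix (Fin m) (Fin n) ℂ) (j : Fin m) : ‖yv M j‖ = singularValues M j := by
  have h := inner_yv M j j
  simp only [if_pos rfl] at h
  rw [@norm_eq_sqrt_re_inner ℂ, h]
  simp [singularValues]

noncomputable def xv (M : Matrix (Fin m) (Fin n) ℂ) (j : Fin m) : EuclideanSpace ℂ (Fin n) :=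
  if singularValues M j = 0 then 0 else (singularValues M j)⁻¹ • yv M j

lemma yv_eq_smul (M : Matrix (Fin m) (Fin n) ℂ) (j : Fin m) :
    yv M j = singularValues M j • xv M j := by
  unfold xv
  split
  · next h => rw [smul_zero, ← norm_eq_zero, norm_yv, h]
  · next h => rw [smul_smul, mul_inv_cancel₀ h, one_smul]

lemma norm_xv_le (M : Matrix (Fin m) (Fin n) ℂ) (j : Fin m) : ‖xv M j‖ ≤ 1 := by
  unfold xv
  split
  · simp
  · next h =>
    rw [norm_smul, norm_yv, norm_inv, Real.norm_eq_abs,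
      abs_of_nonneg (show (0:ℝ) ≤ singularValues M j from Real.sqrt_nonneg _),
      inv_mul_cancel₀ h]

lemma inner_xv (M : Matrix (Fin m) (Fin n) ℂ) (j l : Fin m)
    (hj : singularValues M j ≠ 0) (hl : singularValues M l ≠ 0) :
    ⟪xv M j, xv M l⟫ = if j = l then 1 else 0 := by
  unfold xv
  rw [if_neg hj, if_neg hl, RCLike.real_smul_eq_coe_smul (K := ℂ) (x := yv M j),
    RCLike.real_smul_eq_coe_smul (K := ℂ) (x := yv M l),
    inner_smul_left, inner_smul_right, inner_yv]
  split
  · next h =>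
    subst h
    have hsq : singularValues M j ^ 2
        = (Matrix.isHermitian_mul_conjTranspose_self M).eigenvalues j :=
      Real.sq_sqrt (Matrix.eigenvalues_self_mul_conjTranspose_nonneg M j)
    rw [← hsq, RCLike.conj_ofReal]
    have hc : ((singularValues M j : ℂ)) ≠ 0 := by
      exact_mod_cast hj
    push_cast
    field_simp
    exact div_self (pow_ne_zero 2 hc)
  · simp


end spec

section core
variable {m n : ℕ}
local notation "⟪" x ", " y "⟫" => @inner ℂ _ _ x y

lemma sum_re_inner_le (M : Matrix (Fin m) (Fin n) ℂ) (s : Finset (Fin m))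
    (u : Fin m → EuclideanSpace ℂ (Fin m)) (v : Fin m → EuclideanSpace ℂ (Fin n))
    (hu : Orthonormal ℂ (fun i : s => u i)) (hv : Orthonormal ℂ (fun i : s => v i)) :
    ∑ i ∈ s, (⟪u i, toE (M *ᵥ (v i))⟫).re ≤ kyFan s.card M := by
  classical
  have hσ0 : ∀ j, 0 ≤ singularValues M j := fun j => Real.sqrt_nonneg _
  have hnormu : ∀ i ∈ s, ‖u i‖ = 1 := fun i hi => hu.1 ⟨i, hi⟩
  have hnormv : ∀ i ∈ s, ‖v i‖ = 1 := fun i hi => hv.1 ⟨i, hi⟩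
  have hwon : Orthonormal ℂ (wB M) :=
    (Matrix.isHermitian_mul_conjTranspose_self M).eigenvectorBasis.orthonormal
  have hnormw : ∀ j, ‖wB M j‖ = 1 := fun j => hwon.1 j
  -- Step A: pointwise expansion bound
  have hA : ∀ i ∈ s, (⟪u i, toE (M *ᵥ (v i))⟫).re
      ≤ ∑ j, singularValues M j * (‖⟪u i, wB M j⟫‖ * ‖⟪xv M j, v i⟫‖) := by
    intro i hi
    have hexp : ⟪u i, toE (M *ᵥ (v i))⟫
        = ∑ j, ⟪u i, wB M j⟫ * (((singularValues M j : ℂ)) * ⟪xv M j, v i⟫) := by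
      rw [← OrthonormalBasis.sum_inner_mul_inner
        (Matrix.isHermitian_mul_conjTranspose_self M).eigenvectorBasis (u i) (toE (M *ᵥ v i))]
      refine Finset.sum_congr rfl fun j _ => ?_
      congr 1
      have h1 : ⟪(Matrix.isHermitian_mul_conjTranspose_self M).eigenvectorBasis j,
          toE (M *ᵥ v i)⟫ = ⟪yv M j, v i⟫ := inner_wB_mulVec M j (v i)
      rw [h1, yv_eq_smul, RCLike.real_smul_eq_coe_smul (K := ℂ), inner_smul_left,
        RCLike.conj_ofReal]
      norm_cast
    rw [hexp, Complex.re_sum]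
    refine Finset.sum_le_sum fun j _ => ?_
    calc (⟪u i, wB M j⟫ * (((singularValues M j : ℂ)) * ⟪xv M j, v i⟫)).re
        ≤ ‖⟪u i, wB M j⟫ * (((singularValues M j : ℂ)) * ⟪xv M j, v i⟫)‖ :=
          by exact Complex.re_le_norm _
      _ = singularValues M j * (‖⟪u i, wB M j⟫‖ * ‖⟪xv M j, v i⟫‖) := by
          rw [norm_mul, norm_mul, Complex.norm_real, Real.norm_eq_abs,
            abs_of_nonneg (hσ0 j)]
          ring
  have hstep : ∑ i ∈ s, (⟪u i, toE (M *ᵥ (v i))⟫).re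
      ≤ ∑ j, singularValues M j * ∑ i ∈ s, ‖⟪u i, wB M j⟫‖ * ‖⟪xv M j, v i⟫‖ := by
    calc ∑ i ∈ s, (⟪u i, toE (M *ᵥ (v i))⟫).re
        ≤ ∑ i ∈ s, ∑ j, singularValues M j * (‖⟪u i, wB M j⟫‖ * ‖⟪xv M j, v i⟫‖) :=
          Finset.sum_le_sum hA
      _ = ∑ j, ∑ i ∈ s, singularValues M j * (‖⟪u i, wB M j⟫‖ * ‖⟪xv M j, v i⟫‖) :=
          Finset.sum_comm
      _ = ∑ j, singularValues M j * ∑ i ∈ s, ‖⟪u i, wB M j⟫‖ * ‖⟪xv M j, v i⟫‖ := by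
          refine Finset.sum_congr rfl fun j _ => ?_
          rw [Finset.mul_sum]
  set c : Fin m → ℝ := fun j => ∑ i ∈ s, ‖⟪u i, wB M j⟫‖ * ‖⟪xv M j, v i⟫‖ with hcdef
  have hc0 : ∀ j, 0 ≤ c j := fun j =>
    Finset.sum_nonneg fun i _ => mul_nonneg (norm_nonneg _) (norm_nonneg _)
  have hbessel_u : ∀ (j : Fin m) (z : EuclideanSpace ℂ (Fin m)),
      ∑ i ∈ s, ‖⟪u i, z⟫‖ ^ 2 ≤ ‖z‖ ^ 2 := by
    intro j z
    have h := hu.sum_inner_products_le z (s := Finset.univ)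
    rwa [← Finset.sum_coe_sort s (fun i => ‖⟪u i, z⟫‖ ^ 2)]
  have hbessel_v : ∀ z : EuclideanSpace ℂ (Fin n),
      ∑ i ∈ s, ‖⟪v i, z⟫‖ ^ 2 ≤ ‖z‖ ^ 2 := by
    intro z
    have h := hv.sum_inner_products_le z (s := Finset.univ)
    rwa [← Finset.sum_coe_sort s (fun i => ‖⟪v i, z⟫‖ ^ 2)]
  have hc1 : ∀ j, c j ≤ 1 := by
    intro j
    have h2 : ∀ i ∈ s, ‖⟪u i, wB M j⟫‖ * ‖⟪xv M j, v i⟫‖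
        ≤ (‖⟪u i, wB M j⟫‖ ^ 2 + ‖⟪v i, xv M j⟫‖ ^ 2) / 2 := by
      intro i _
      rw [norm_inner_symm (xv M j) (v i)]
      nlinarith [sq_nonneg (‖⟪u i, wB M j⟫‖ - ‖⟪v i, xv M j⟫‖)]
    have hb1 := hbessel_u j (wB M j)
    have hb2 := hbessel_v (xv M j)
    have hx1 : ‖xv M j‖ ^ 2 ≤ 1 := by
      have := norm_xv_le M j
      nlinarith [norm_nonneg (xv M j)]
    calc c j ≤ ∑ i ∈ s, (‖⟪u i, wB M j⟫‖ ^ 2 + ‖⟪v i, xv M j⟫‖ ^ 2) / 2 :=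
          Finset.sum_le_sum h2
      _ = (∑ i ∈ s, ‖⟪u i, wB M j⟫‖ ^ 2 + ∑ i ∈ s, ‖⟪v i, xv M j⟫‖ ^ 2) / 2 := by
          rw [← Finset.sum_add_distrib, Finset.sum_div]
      _ ≤ 1 := by
          rw [hnormw j, one_pow] at hb1
          linarith
  -- sum of c bounded by card
  set t0 : Finset (Fin m) := Finset.univ.filter (fun j => singularValues M j ≠ 0) with ht0def
  have ht0mem : ∀ j ∈ t0, singularValues M j ≠ 0 := fun j hj => (Finset.mem_filter.mp hj).2
  have hxon : Orthonormal ℂ (fun j : t0 => xv M j) := by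
    rw [orthonormal_iff_ite]
    intro j l
    rw [inner_xv M j l (ht0mem j j.2) (ht0mem l l.2)]
    by_cases h : (j : Fin m) = (l : Fin m)
    · rw [if_pos h, if_pos (Subtype.ext h)]
    · rw [if_neg h, if_neg (fun hh => h (congrArg Subtype.val hh))]
  have hcs : ∑ j, c j ≤ (s.card : ℝ) := by
    have hswap : ∑ j, c j = ∑ i ∈ s, ∑ j, ‖⟪u i, wB M j⟫‖ * ‖⟪xv M j, v i⟫‖ :=
      Finset.sum_comm
    rw [hswap]
    have hone : ∀ i ∈ s, ∑ j, ‖⟪u i, wB M j⟫‖ * ‖⟪xv M j, v i⟫‖ ≤ 1 := by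
      intro i hi
      have hzero : ∑ j, ‖⟪u i, wB M j⟫‖ * ‖⟪xv M j, v i⟫‖
          = ∑ j ∈ t0, ‖⟪u i, wB M j⟫‖ * ‖⟪xv M j, v i⟫‖ := by
        symm
        apply Finset.sum_subset (Finset.subset_univ _)
        intro j _ hj
        have hj0 : singularValues M j = 0 := by
          by_contra hne
          exact hj (Finset.mem_filter.mpr ⟨Finset.mem_univ j, hne⟩)
        have : xv M j = 0 := by rw [xv, if_pos hj0]
        rw [this, inner_zero_left, norm_zero, mul_zero]
      rw [hzero]
      have hcs2 := Finset.sum_mul_sq_le_sq_mul_sq t0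
        (fun j => ‖⟪u i, wB M j⟫‖) (fun j => ‖⟪xv M j, v i⟫‖)
      have hu2 : ∑ j ∈ t0, ‖⟪u i, wB M j⟫‖ ^ 2 ≤ 1 := by
        have h := hwon.sum_inner_products_le (u i) (s := t0)
        have heq : ∀ j ∈ t0, ‖⟪wB M j, u i⟫‖ ^ 2 = ‖⟪u i, wB M j⟫‖ ^ 2 := fun j _ => by
          rw [norm_inner_symm]
        rw [← Finset.sum_congr rfl heq]
        calc ∑ j ∈ t0, ‖⟪wB M j, u i⟫‖ ^ 2 ≤ ‖u i‖ ^ 2 := h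
          _ = 1 := by rw [hnormu i hi]; norm_num
      have hv2 : ∑ j ∈ t0, ‖⟪xv M j, v i⟫‖ ^ 2 ≤ 1 := by
        have h := hxon.sum_inner_products_le (v i) (s := Finset.univ)
        rw [← Finset.sum_coe_sort t0 (fun j => ‖⟪xv M j, v i⟫‖ ^ 2)]
        calc ∑ j : t0, ‖⟪xv M (j : Fin m), v i⟫‖ ^ 2 ≤ ‖v i‖ ^ 2 := h
          _ = 1 := by rw [hnormv i hi]; norm_num
      have hnn : 0 ≤ ∑ j ∈ t0, ‖⟪u i, wB M j⟫‖ * ‖⟪xv M j, v i⟫‖ :=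
        Finset.sum_nonneg fun j _ => mul_nonneg (norm_nonneg _) (norm_nonneg _)
      have hp0 : (0:ℝ) ≤ ∑ j ∈ t0, ‖⟪u i, wB M j⟫‖ ^ 2 :=
        Finset.sum_nonneg fun j _ => sq_nonneg _
      have hq0 : (0:ℝ) ≤ ∑ j ∈ t0, ‖⟪xv M j, v i⟫‖ ^ 2 :=
        Finset.sum_nonneg fun j _ => sq_nonneg _
      nlinarith
    calc ∑ i ∈ s, ∑ j, ‖⟪u i, wB M j⟫‖ * ‖⟪xv M j, v i⟫‖ ≤ ∑ i ∈ s, (1:ℝ) :=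
        Finset.sum_le_sum hone
      _ = s.card := by simp
  obtain ⟨t, htc, hts⟩ := sum_mul_le_top_sum (singularValues M) c s.card
    (le_trans (Finset.card_le_univ s) (by simp)) hσ0 hc0 hc1 hcs
  calc ∑ i ∈ s, (⟪u i, toE (M *ᵥ (v i))⟫).re
      ≤ ∑ j, singularValues M j * c j := hstep
    _ ≤ ∑ j ∈ t, singularValues M j := hts
    _ ≤ kyFan t.card M := le_kyFan M t
    _ = kyFan s.card M := by rw [htc]
end core

section main
local notation "⟪" x ", " y "⟫" => @inner ℂ _ _ x y

theorem kyFan_triangle (m n k : ℕ) (hk1 : 1 ≤ k) (hk : k ≤ min m n)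
    (A B : Matrix (Fin m) (Fin n) ℂ) :
    kyFan k (A + B) ≤ kyFan k A + kyFan k B := by
  classical
  have hm : k ≤ m := le_trans hk (min_le_left m n)
  have hnn : (0:ℝ) ≤ kyFan k A + kyFan k B := by
    have := kyFan_nonneg A hm; have := kyFan_nonneg B hm; linarith
  rw [kyFan]
  apply Real.sSup_le _ hnn
  rintro r ⟨s, hs, rfl⟩
  simp only [Set.mem_setOf_eq] at hs
  set C := A + B with hC
  set s' := s.filter (fun i => singularValues C i ≠ 0) with hs'
  have hsub : s' ⊆ s := Finset.filter_subset _ _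
  have hsum : ∑ i ∈ s, singularValues C i = ∑ i ∈ s', singularValues C i := by
    symm
    apply Finset.sum_subset hsub
    intro i hi hni
    rw [hs', Finset.mem_filter] at hni
    push_neg at hni
    exact hni hi
  have hmem : ∀ i ∈ s', singularValues C i ≠ 0 := fun i hi => (Finset.mem_filter.mp hi).2
  have hu : Orthonormal ℂ (fun i : s' => wB C i) :=
    (Matrix.isHermitian_mul_conjTranspose_self C).eigenvectorBasis.orthonormal.comp
      _ Subtype.val_injective
  have hv : Orthonormal ℂ (fun i : s' => xv C i) := by
    rw [orthonormal_iff_ite]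
    intro j l
    rw [inner_xv C j l (hmem j j.2) (hmem l l.2)]
    by_cases h : (j : Fin m) = (l : Fin m)
    · rw [if_pos h, if_pos (Subtype.ext h)]
    · rw [if_neg h, if_neg (fun hh => h (congrArg Subtype.val hh))]
  have hre : ∀ i ∈ s', singularValues C i = (⟪wB C i, toE (C *ᵥ (xv C i))⟫).re := by
    intro i hi
    have hne := hmem i hi
    rw [inner_wB_mulVec, yv_eq_smul, RCLike.real_smul_eq_coe_smul (K := ℂ), inner_smul_left,
      RCLike.conj_ofReal, inner_xv C i i hne hne, if_pos rfl, mul_one]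
    simp
  calc ∑ i ∈ s, singularValues C i
      = ∑ i ∈ s', (⟪wB C i, toE (C *ᵥ (xv C i))⟫).re := by
        rw [hsum]; exact Finset.sum_congr rfl hre
    _ = ∑ i ∈ s', (⟪wB C i, toE (A *ᵥ (xv C i))⟫).re
        + ∑ i ∈ s', (⟪wB C i, toE (B *ᵥ (xv C i))⟫).re := by
        rw [← Finset.sum_add_distrib]
        refine Finset.sum_congr rfl fun i _ => ?_
        have hadd : toE (C *ᵥ (xv C i : Fin n → ℂ))
            = toE (A *ᵥ (xv C i : Fin n → ℂ)) + toE (B *ᵥ (xv C i : Fin n → ℂ)) := by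
          rw [hC]
          show toE ((A + B) *ᵥ _) = _
          rw [Matrix.add_mulVec]
          rfl
        rw [hadd, inner_add_right, Complex.add_re]
    _ ≤ kyFan s'.card A + kyFan s'.card B :=
        add_le_add (sum_re_inner_le A s' _ _ hu hv) (sum_re_inner_le B s' _ _ hu hv)
    _ ≤ kyFan k A + kyFan k B := by
        have hcard : s'.card ≤ k := hs ▸ Finset.card_le_card hsub
        exact add_le_add (kyFan_mono A hcard hm) (kyFan_mono B hcard hm)
end main
end

section
/- Let n ≥ m ≥ k ≥ 1 be integers and let A be an m×n matrix with entries in {0,1}. Then the sum of the k largest singular values of A satisfies ‖A‖_{F_k} ≤ (1/2)(1 + √k)√(mn). -/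
open Matrix BigOperators

section Aux

variable {m : ℕ}

/-- Sum of eigenvalues of a Hermitian matrix equals the real part of the trace. -/
lemma aux_sum_eigenvalues_eq_trace_re (B : Matrix (Fin m) (Fin m) ℂ) (hB : B.IsHermitian) :
    (∑ i, hB.eigenvalues i : ℝ) = B.trace.re := by
  have hUU : star (hB.eigenvectorUnitary : Matrix (Fin m) (Fin m) ℂ) *
      (hB.eigenvectorUnitary : Matrix (Fin m) (Fin m) ℂ) = 1 :=
    Matrix.mem_unitaryGroup_iff'.mp hB.eigenvectorUnitary.2
  have htr : B.trace = ∑ i, (hB.eigenvalues i : ℂ) := by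
    conv_lhs => rw [hB.spectral_theorem, Unitary.conjStarAlgAut_apply]
    rw [Matrix.trace_mul_cycle, hUU, one_mul, Matrix.trace_diagonal]
    simp [Function.comp]
  rw [htr, Complex.re_sum]
  simp

set_option maxHeartbeats 1000000 in
/-- Rayleigh-type bound: quadratic form is at most (max eigenvalue) times the norm squared. -/
lemma aux_quadForm_re_le (B : Matrix (Fin m) (Fin m) ℂ) (hB : B.IsHermitian)
    (μ : ℝ) (hμ : ∀ i, hB.eigenvalues i ≤ μ) (x : Fin m → ℂ) :
    (star x ⬝ᵥ B *ᵥ x).re ≤ μ * (star x ⬝ᵥ x).re := by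
  set U : Matrix (Fin m) (Fin m) ℂ := (hB.eigenvectorUnitary : Matrix (Fin m) (Fin m) ℂ) with hU
  set y : Fin m → ℂ := star U *ᵥ x with hy
  have hsy : star y = star x ᵥ* U := by
    rw [hy, star_mulVec, Matrix.star_eq_conjTranspose, conjTranspose_conjTranspose]
  have hUU : U * star U = 1 := Matrix.mem_unitaryGroup_iff.mp hB.eigenvectorUnitary.2
  have h1 : star x ⬝ᵥ B *ᵥ x
      = ∑ i, (hB.eigenvalues i : ℂ) * ((starRingEnd ℂ) (y i) * y i) := by
    conv_lhs => rw [hB.spectral_theorem, Unitary.conjStarAlgAut_apply]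
    rw [← Matrix.mulVec_mulVec, ← Matrix.mulVec_mulVec, Matrix.dotProduct_mulVec, ← hsy]
    simp only [dotProduct, Matrix.mulVec_diagonal, Pi.star_apply, Function.comp_apply,
      Complex.star_def]
    simp only [← hU, ← hy]
    exact Finset.sum_congr rfl fun i _ => mul_left_comm _ _ _
  have h2 : star x ⬝ᵥ x = ∑ i, ((starRingEnd ℂ) (y i) * y i) := by
    have : star x ⬝ᵥ x = star x ⬝ᵥ ((U * star U) *ᵥ x) := by rw [hUU, Matrix.one_mulVec]
    rw [this, ← Matrix.mulVec_mulVec, Matrix.dotProduct_mulVec, ← hsy]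
    simp only [dotProduct, Pi.star_apply, Complex.star_def]
    exact Finset.sum_congr rfl fun i _ => rfl
  have hns : ∀ i : Fin m, (starRingEnd ℂ) (y i) * y i = (Complex.normSq (y i) : ℂ) :=
    fun i => (Complex.normSq_eq_conj_mul_self).symm
  rw [h1, h2, Complex.re_sum, Complex.re_sum]
  have hterm : ∀ i : Fin m,
      ((hB.eigenvalues i : ℂ) * ((starRingEnd ℂ) (y i) * y i)).re
        = hB.eigenvalues i * Complex.normSq (y i) := by
    intro i
    rw [hns i, ← Complex.ofReal_mul, Complex.ofReal_re]
  have hterm2 : ∀ i : Fin m, ((starRingEnd ℂ) (y i) * y i).re = Complex.normSq (y i) := by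
    intro i
    rw [hns i, Complex.ofReal_re]
  calc ∑ i, ((hB.eigenvalues i : ℂ) * ((starRingEnd ℂ) (y i) * y i)).re
      = ∑ i, hB.eigenvalues i * Complex.normSq (y i) := Finset.sum_congr rfl fun i _ => hterm i
    _ ≤ ∑ i, μ * Complex.normSq (y i) :=
        Finset.sum_le_sum fun i _ =>
          mul_le_mul_of_nonneg_right (hμ i) (Complex.normSq_nonneg _)
    _ = μ * ∑ i, ((starRingEnd ℂ) (y i) * y i).re := by
        rw [Finset.mul_sum]
        exact Finset.sum_congr rfl fun i _ => by rw [hterm2 i]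

end Aux

set_option maxHeartbeats 1000000 in
theorem kyFan_le_of_zero_one (m n k : ℕ) (hk1 : 1 ≤ k) (hkm : k ≤ m) (hmn : m ≤ n)
    (A : Matrix (Fin m) (Fin n) ℂ) (hA : ∀ i j, A i j = 0 ∨ A i j = 1) :
    kyFan k A ≤ (1 / 2) * (1 + Real.sqrt k) * Real.sqrt (m * n) := by
  classical
  have hm1 : 1 ≤ m := le_trans hk1 hkm
  have hn1 : 1 ≤ n := le_trans hm1 hmn
  set B : Matrix (Fin m) (Fin m) ℂ := A * Aᴴ with hBdef
  have hB : B.IsHermitian := Matrix.isHermitian_mul_conjTranspose_self A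
  set lam : Fin m → ℝ := hB.eigenvalues with hlamdef
  have hlam0 : ∀ i, 0 ≤ lam i := fun i =>
    Matrix.eigenvalues_self_mul_conjTranspose_nonneg A i
  have hsv : ∀ i, singularValues A i = Real.sqrt (lam i) := fun i => rfl
  have hsv0 : ∀ i, 0 ≤ singularValues A i := fun i => Real.sqrt_nonneg _
  have hsvsq : ∀ i, (singularValues A i) ^ 2 = lam i := fun i => by
    rw [hsv i, Real.sq_sqrt (hlam0 i)]
  -- the real entries
  set a : Fin m → Fin n → ℝ := fun i j => (A i j).re with hadef
  have ha01 : ∀ i j, a i j = 0 ∨ a i j = 1 := by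
    intro i j
    rcases hA i j with h | h <;> simp [hadef, h]
  have haA : ∀ i j, A i j = (a i j : ℂ) := by
    intro i j
    rcases hA i j with h | h <;> simp [hadef, h]
  -- E = total number of ones = trace of B
  set E : ℝ := ∑ i, ∑ j, a i j with hEdef
  have hE0 : 0 ≤ E :=
    Finset.sum_nonneg fun i _ => Finset.sum_nonneg fun j _ => by
      rcases ha01 i j with h | h <;> simp [h]
  have hEmn : E ≤ (m : ℝ) * n := by
    calc E ≤ ∑ i : Fin m, ∑ j : Fin n, (1 : ℝ) :=
          Finset.sum_le_sum fun i _ => Finset.sum_le_sum fun j _ => by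
            rcases ha01 i j with h | h <;> simp [h]
      _ = (m : ℝ) * n := by simp [mul_comm]
  have htrace : B.trace.re = E := by
    have : B.trace = ∑ i : Fin m, ∑ j : Fin n, A i j * star (A i j) := by
      simp [hBdef, Matrix.trace, Matrix.diag, Matrix.mul_apply, Matrix.conjTranspose_apply]
    rw [this]
    rw [Complex.re_sum]
    refine Finset.sum_congr rfl fun i _ => ?_
    rw [Complex.re_sum]
    refine Finset.sum_congr rfl fun j _ => ?_
    rcases hA i j with h | h <;> rcases ha01 i j with h' | h' <;>
      simp [h, h'] <;> simp [hadef, h] at h' ⊢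
  have hsum_lam : ∑ i, lam i = E := by
    rw [hlamdef, aux_sum_eigenvalues_eq_trace_re B hB, htrace]
  -- max eigenvalue
  obtain ⟨i0, -, hmax⟩ := Finset.exists_max_image (Finset.univ : Finset (Fin m)) lam
    ⟨⟨0, hm1⟩, Finset.mem_univ _⟩
  set μ : ℝ := lam i0 with hμdef
  have hμ0 : 0 ≤ μ := hlam0 i0
  have hμmax : ∀ i, lam i ≤ μ := fun i => hmax i (Finset.mem_univ i)
  have hμE : μ ≤ E := by
    rw [← hsum_lam]
    exact Finset.single_le_sum (fun i _ => hlam0 i) (Finset.mem_univ i0)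
  -- Rayleigh bound with the all-ones vector : E^2 ≤ μ * m * n
  have hRayleigh : E ^ 2 ≤ μ * m * n := by
    set x : Fin m → ℂ := fun _ => 1 with hxdef
    have hxx : (star x ⬝ᵥ x).re = (m : ℝ) := by
      simp [hxdef, dotProduct]
    have hquad : (star x ⬝ᵥ B *ᵥ x).re ≤ μ * m := by
      have := aux_quadForm_re_le B hB μ hμmax x
      rwa [hxx] at this
    -- compute the quadratic form: column sums
    set c : Fin n → ℂ := Aᴴ *ᵥ x with hcdef
    have hform : star x ⬝ᵥ B *ᵥ x = star c ⬝ᵥ c := by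
      rw [hBdef, ← Matrix.mulVec_mulVec, Matrix.dotProduct_mulVec, hcdef, star_mulVec,
        conjTranspose_conjTranspose]
    set d : Fin n → ℝ := fun j => ∑ i, a i j with hddef
    have hc : ∀ j, c j = (d j : ℂ) := by
      intro j
      simp only [hcdef, Matrix.mulVec, dotProduct, Matrix.conjTranspose_apply, hxdef, mul_one,
        hddef]
      rw [Complex.ofReal_sum]
      refine Finset.sum_congr rfl fun i _ => ?_
      rw [haA i j]
      simp
    have hformre : (star x ⬝ᵥ B *ᵥ x).re = ∑ j, (d j) ^ 2 := by
      rw [hform]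
      simp only [dotProduct, Pi.star_apply]
      rw [Complex.re_sum]
      refine Finset.sum_congr rfl fun j _ => ?_
      rw [hc j]
      simp [sq]
    have hsumd : ∑ j, d j = E := by
      rw [hEdef, Finset.sum_comm]
    have hCS : E ^ 2 ≤ (n : ℝ) * ∑ j, (d j) ^ 2 := by
      rw [← hsumd]
      have := sq_sum_le_card_mul_sum_sq (s := (Finset.univ : Finset (Fin n))) (f := d)
      simpa using this
    calc E ^ 2 ≤ (n : ℝ) * ∑ j, (d j) ^ 2 := hCS
      _ = (n : ℝ) * (star x ⬝ᵥ B *ᵥ x).re := by rw [hformre]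
      _ ≤ (n : ℝ) * (μ * m) := by
          apply mul_le_mul_of_nonneg_left hquad (by positivity)
      _ = μ * m * n := by ring
  -- notation for the bound
  set S : ℝ := Real.sqrt (m * n) with hSdef
  have hS0 : 0 ≤ S := Real.sqrt_nonneg _
  have hSsq : S ^ 2 = (m : ℝ) * n := Real.sq_sqrt (by positivity)
  set r : ℝ := Real.sqrt k with hrdef
  have hr1 : 1 ≤ r := by
    rw [hrdef]
    rw [show (1 : ℝ) = Real.sqrt 1 by simp]
    exact Real.sqrt_le_sqrt (by exact_mod_cast hk1)
  have hrsq : r ^ 2 = (k : ℝ) := Real.sq_sqrt (by positivity)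
  set t : ℝ := singularValues A i0 with htdef
  have ht0 : 0 ≤ t := hsv0 i0
  have htsq : t ^ 2 = μ := hsvsq i0
  have htS : t ≤ S := by
    have h : lam i0 ≤ (m : ℝ) * n := by rw [← hμdef]; linarith
    rw [htdef, hsv i0, hSdef]
    exact Real.sqrt_le_sqrt h
  have htSE : E ≤ t * S := by
    nlinarith [hRayleigh, htsq, hSsq, mul_nonneg ht0 hS0, hE0]
  -- the target bound
  have hgoal : ∀ s : Finset (Fin m), s.card = k →
      ∑ i ∈ s, singularValues A i ≤ (1 / 2) * (1 + r) * S := by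
    intro s hs
    by_cases hi0 : i0 ∈ s
    · -- main case: the max is in s
      have herase : (s.erase i0).card = k - 1 := by rw [Finset.card_erase_of_mem hi0, hs]
      have hsum_erase_sq : ∑ i ∈ s.erase i0, (singularValues A i) ^ 2 ≤ E - μ := by
        have hsub : s.erase i0 ⊆ Finset.univ.erase i0 := by
          intro x hx
          rw [Finset.mem_erase] at hx ⊢
          exact ⟨hx.1, Finset.mem_univ _⟩
        have h1 : ∑ i ∈ s.erase i0, (singularValues A i) ^ 2
            ≤ ∑ i ∈ Finset.univ.erase i0, (singularValues A i) ^ 2 :=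
          Finset.sum_le_sum_of_subset_of_nonneg hsub fun i _ _ => sq_nonneg _
        have hall : ∑ i, (singularValues A i) ^ 2 = E := by
          rw [← hsum_lam]
          exact Finset.sum_congr rfl fun i _ => hsvsq i
        have h3 : ∑ i ∈ Finset.univ.erase i0, (singularValues A i) ^ 2
            + (singularValues A i0) ^ 2 = ∑ i, (singularValues A i) ^ 2 :=
          Finset.sum_erase_add _ _ (Finset.mem_univ i0)
        rw [hall, hsvsq i0] at h3
        have h2 : ∑ i ∈ Finset.univ.erase i0, (singularValues A i) ^ 2 = E - μ := by
          rw [hμdef]; linarith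
        linarith
      have hCS2 : (∑ i ∈ s.erase i0, singularValues A i) ^ 2 ≤ ((k : ℝ) - 1) * (E - μ) := by
        have h1 := sq_sum_le_card_mul_sum_sq (s := s.erase i0) (f := singularValues A)
        rw [herase] at h1
        have hcast : ((k - 1 : ℕ) : ℝ) = (k : ℝ) - 1 := by
          rw [Nat.cast_sub hk1]; simp
        calc (∑ i ∈ s.erase i0, singularValues A i) ^ 2
            ≤ ((k - 1 : ℕ) : ℝ) * ∑ i ∈ s.erase i0, (singularValues A i) ^ 2 := by
              exact_mod_cast h1
          _ ≤ ((k : ℝ) - 1) * (E - μ) := by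
              rw [hcast]
              apply mul_le_mul_of_nonneg_left hsum_erase_sq
              have : (1 : ℝ) ≤ (k : ℝ) := by exact_mod_cast hk1
              linarith
      have hsum_erase : ∑ i ∈ s.erase i0, singularValues A i
          ≤ Real.sqrt (((k : ℝ) - 1) * (E - μ)) := by
        have hnn : 0 ≤ ∑ i ∈ s.erase i0, singularValues A i :=
          Finset.sum_nonneg fun i _ => hsv0 i
        rw [← Real.sqrt_sq hnn]
        exact Real.sqrt_le_sqrt hCS2
      have hsplit : ∑ i ∈ s, singularValues A i
          = t + ∑ i ∈ s.erase i0, singularValues A i := by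
        rw [htdef, Finset.add_sum_erase s (singularValues A) hi0]
      -- key algebraic inequality
      have hP : Real.sqrt (((k : ℝ) - 1) * (E - μ)) ≤ (1 / 2) * (1 + r) * S - t := by
        have hrhs0 : 0 ≤ (1 / 2) * (1 + r) * S - t := by nlinarith
        rw [show ((1:ℝ)/2) * (1 + r) * S - t = Real.sqrt (((1/2) * (1 + r) * S - t)^2) by
          rw [Real.sqrt_sq hrhs0]]
        apply Real.sqrt_le_sqrt
        -- (k-1)(E - μ) ≤ (k-1)(tS - t²) ≤ (cS - t)²
        have hk1r : (1 : ℝ) ≤ (k : ℝ) := by exact_mod_cast hk1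
        have h1 : ((k : ℝ) - 1) * (E - μ) ≤ ((k : ℝ) - 1) * (t * S - t ^ 2) := by
          apply mul_le_mul_of_nonneg_left _ (by linarith)
          linarith [htSE, htsq]
        have h2 : ((k : ℝ) - 1) * (t * S - t ^ 2) ≤ ((1 / 2) * (1 + r) * S - t) ^ 2 := by
          nlinarith [sq_nonneg (r * t - (1 / 2) * (1 + r) * S), hrsq]
        linarith
      rw [hsplit]
      linarith [hsum_erase, hP]
    · -- the max is not in s : crude Cauchy-Schwarz suffices
      have hsub : s ⊆ Finset.univ.erase i0 := by
        intro x hx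
        rw [Finset.mem_erase]
        exact ⟨fun h => hi0 (h ▸ hx), Finset.mem_univ _⟩
      have hsum_sq : ∑ i ∈ s, (singularValues A i) ^ 2 ≤ E - μ := by
        have h1 : ∑ i ∈ s, (singularValues A i) ^ 2
            ≤ ∑ i ∈ Finset.univ.erase i0, (singularValues A i) ^ 2 :=
          Finset.sum_le_sum_of_subset_of_nonneg hsub fun i _ _ => sq_nonneg _
        have hall : ∑ i, (singularValues A i) ^ 2 = E := by
          rw [← hsum_lam]
          exact Finset.sum_congr rfl fun i _ => hsvsq i
        have h3 : ∑ i ∈ Finset.univ.erase i0, (singularValues A i) ^ 2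
            + (singularValues A i0) ^ 2 = ∑ i, (singularValues A i) ^ 2 :=
          Finset.sum_erase_add _ _ (Finset.mem_univ i0)
        rw [hall, hsvsq i0] at h3
        have h2 : ∑ i ∈ Finset.univ.erase i0, (singularValues A i) ^ 2 = E - μ := by
          rw [hμdef]; linarith
        linarith
      have hCS2 : (∑ i ∈ s, singularValues A i) ^ 2 ≤ (k : ℝ) * (E - μ) := by
        have h1 := sq_sum_le_card_mul_sum_sq (s := s) (f := singularValues A)
        rw [hs] at h1
        calc (∑ i ∈ s, singularValues A i) ^ 2
            ≤ (k : ℝ) * ∑ i ∈ s, (singularValues A i) ^ 2 := by exact_mod_cast h1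
          _ ≤ (k : ℝ) * (E - μ) := by
              apply mul_le_mul_of_nonneg_left hsum_sq (by positivity)
      -- k (E - μ) ≤ k*N/4 ≤ c² N = (cS)²
      have hN0 : (0 : ℝ) < (m : ℝ) * n := by positivity
      have hquarter : (k : ℝ) * (E - μ) ≤ ((1 / 2) * (1 + r) * S) ^ 2 := by
        have hEμ : E - μ ≤ ((m : ℝ) * n) / 4 := by
          -- μ ≥ E² / (mn)
          nlinarith [hRayleigh, sq_nonneg ((m : ℝ) * n - 2 * E), hN0]
        have h4 : (k : ℝ) * (E - μ) ≤ (k : ℝ) * (((m : ℝ) * n) / 4) := by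
          apply mul_le_mul_of_nonneg_left hEμ (by positivity)
        have h5 : ((1 / 2) * (1 + r) * S) ^ 2 = (1 + r) ^ 2 / 4 * ((m : ℝ) * n) := by
          rw [mul_pow, mul_pow, hSsq]; ring
        rw [h5]
        have h6 : (k : ℝ) ≤ (1 + r) ^ 2 := by nlinarith [hrsq, hr1]
        nlinarith
      have hnn : 0 ≤ ∑ i ∈ s, singularValues A i := Finset.sum_nonneg fun i _ => hsv0 i
      have hrhs0 : 0 ≤ (1 / 2) * (1 + r) * S := by positivity
      nlinarith [hCS2, hquarter]
  -- conclude via sSup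
  apply Real.sSup_le
  · rintro x ⟨s, hs, rfl⟩
    exact hgoal s hs
  · positivity
end
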